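/- Let 0 < Δ < 1/2, α = 1−Δ, and g(θ;Δ) = [sin(αθ)]^{α/Δ} sin(Δθ) / [sin θ]^{1/Δ}. Then g(·;Δ) is monotonically increasing and convex on (0, π). -/

import Mathlib

open Real Set

lemma hasDerivAt_sin_mul (c x : ℝ) :
    HasDerivAt (fun θ : ℝ => Real.sin (c * θ)) (c * Real.cos (c * x)) x := by
  have := (Real.hasDerivAt_sin (c * x)).comp x ((hasDerivAt_id x).const_mul c)
  refine this.congr_deriv ?_
  simp [mul_comm]

lemma hasDerivAt_cos_mul (c x : ℝ) :
    HasDerivAt (fun θ : ℝ => Real.cos (c * θ)) (-(c * Real.sin (c * x))) x := by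
  have := (Real.hasDerivAt_cos (c * x)).comp x ((hasDerivAt_id x).const_mul c)
  refine this.congr_deriv ?_
  simp; ring

lemma hasDerivAt_cot_mul (c x : ℝ) (h : Real.sin (c * x) ≠ 0) :
    HasDerivAt (fun θ : ℝ => Real.cos (c * θ) / Real.sin (c * θ))
      (-(c / (Real.sin (c * x)) ^ 2)) x := by
  have := (hasDerivAt_cos_mul c x).div (hasDerivAt_sin_mul c x) h
  refine this.congr_deriv ?_
  have hs := Real.sin_sq_add_cos_sq (c * x)
  field_simp
  linear_combination (-c) * hs

lemma aux_sin_mul {c θ : ℝ} (hc0 : 0 ≤ c) (hc1 : c ≤ 1) (hθ0 : 0 ≤ θ) (hθπ : θ ≤ π) :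
    c * Real.sin θ ≤ Real.sin (c * θ) := by
  have h0 : (0:ℝ) ∈ Icc (0:ℝ) π := ⟨le_rfl, pi_pos.le⟩
  have hθm : θ ∈ Icc (0:ℝ) π := ⟨hθ0, hθπ⟩
  have := strictConcaveOn_sin_Icc.concaveOn.2 h0 hθm
    (show (0:ℝ) ≤ 1 - c by linarith) hc0 (by ring)
  simpa using this

lemma aux_F {c : ℝ} (hc0 : 0 ≤ c) (hc1 : c ≤ 1) :
    ∀ θ ∈ Icc (0:ℝ) π, Real.cos θ * Real.sin (c * θ) ≤ c * Real.cos (c * θ) * Real.sin θ := by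
  set F : ℝ → ℝ := fun θ => c * Real.cos (c * θ) * Real.sin θ - Real.cos θ * Real.sin (c * θ)
    with hF
  have hd : ∀ x : ℝ, HasDerivAt F ((1 - c ^ 2) * (Real.sin (c * x) * Real.sin x)) x := by
    intro x
    have d1 := ((hasDerivAt_cos_mul c x).const_mul c).mul (Real.hasDerivAt_sin x)
    have d2 := (Real.hasDerivAt_cos x).mul (hasDerivAt_sin_mul c x)
    have := d1.sub d2
    refine this.congr_deriv ?_
    ring
  have hmono : MonotoneOn F (Icc 0 π) := by
    apply monotoneOn_of_deriv_nonneg (convex_Icc 0 π)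
    · exact fun x _ => ((hd x).differentiableAt).continuousAt.continuousWithinAt
    · exact fun x _ => ((hd x).differentiableAt).differentiableWithinAt
    · intro x hx
      rw [interior_Icc] at hx
      rw [(hd x).deriv]
      have h1 : 0 ≤ Real.sin x := Real.sin_nonneg_of_nonneg_of_le_pi hx.1.le hx.2.le
      have h2 : 0 ≤ Real.sin (c * x) := Real.sin_nonneg_of_nonneg_of_le_pi
        (mul_nonneg hc0 hx.1.le)
        (by nlinarith [mul_nonneg (show (0:ℝ) ≤ 1 - c by linarith) hx.1.le, hx.2.le])
      have h3 : (0:ℝ) ≤ 1 - c ^ 2 := by nlinarith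
      exact mul_nonneg h3 (mul_nonneg h2 h1)
  intro θ hθ
  have h0 : F 0 = 0 := by simp [hF]
  have := hmono ⟨le_rfl, pi_pos.le⟩ hθ hθ.1
  rw [h0] at this
  simp only [hF] at this
  linarith

noncomputable def hfun (Δ : ℝ) : ℝ → ℝ := fun θ =>
  ((1 - Δ) / Δ) * Real.log (Real.sin ((1 - Δ) * θ)) + Real.log (Real.sin (Δ * θ))
    - (1 / Δ) * Real.log (Real.sin θ)

noncomputable def h1 (Δ : ℝ) : ℝ → ℝ := fun θ =>
  ((1 - Δ) / Δ) * ((1 - Δ) * (Real.cos ((1 - Δ) * θ) / Real.sin ((1 - Δ) * θ)))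
    + Δ * (Real.cos (Δ * θ) / Real.sin (Δ * θ)) - (1 / Δ) * (Real.cos θ / Real.sin θ)

noncomputable def h2 (Δ : ℝ) : ℝ → ℝ := fun θ =>
  (1 / Δ) * (1 / (Real.sin θ) ^ 2)
    - ((1 - Δ) / Δ) * ((1 - Δ) ^ 2 / (Real.sin ((1 - Δ) * θ)) ^ 2)
    - Δ ^ 2 / (Real.sin (Δ * θ)) ^ 2

lemma hasDerivAt_log_sin_mul (c x : ℝ) (h : Real.sin (c * x) ≠ 0) :
    HasDerivAt (fun θ : ℝ => Real.log (Real.sin (c * θ)))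
      (c * (Real.cos (c * x) / Real.sin (c * x))) x := by
  have := (hasDerivAt_sin_mul c x).log h
  convert this using 1
  ring

lemma hasDerivAt_hfun (Δ x : ℝ) (hΔ : Δ ≠ 0)
    (ha : Real.sin ((1 - Δ) * x) ≠ 0) (hb : Real.sin (Δ * x) ≠ 0)
    (hc : Real.sin x ≠ 0) : HasDerivAt (hfun Δ) (h1 Δ x) x := by
  have d1 := (hasDerivAt_log_sin_mul (1 - Δ) x ha).const_mul ((1 - Δ) / Δ)
  have d2 := hasDerivAt_log_sin_mul Δ x hb
  have d3 := ((Real.hasDerivAt_sin x).log hc).const_mul (1 / Δ)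
  exact (d1.add d2).sub d3

lemma hasDerivAt_h1 (Δ x : ℝ) (hΔ : Δ ≠ 0)
    (ha : Real.sin ((1 - Δ) * x) ≠ 0) (hb : Real.sin (Δ * x) ≠ 0)
    (hc : Real.sin x ≠ 0) : HasDerivAt (h1 Δ) (h2 Δ x) x := by
  have d1 := ((hasDerivAt_cot_mul (1 - Δ) x ha).const_mul (1 - Δ)).const_mul ((1 - Δ) / Δ)
  have d2 := (hasDerivAt_cot_mul Δ x hb).const_mul Δ
  have d3 : HasDerivAt (fun θ : ℝ => Real.cos θ / Real.sin θ) (-(1 / (Real.sin x) ^ 2)) x := by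
    have := hasDerivAt_cot_mul 1 x (by simpa using hc)
    simpa using this
  have := (d1.add d2).sub (d3.const_mul (1 / Δ))
  refine this.congr_deriv ?_
  simp only [h2]
  try ring

lemma h1_nonneg (Δ x : ℝ) (h0 : 0 < Δ) (h1' : Δ < 1/2) (hx : x ∈ Ioo 0 π) :
    0 ≤ h1 Δ x := by
  have hπ := pi_pos
  have hα0 : (0:ℝ) < 1 - Δ := by linarith
  have hα1 : 1 - Δ ≤ 1 := by linarith
  have hs : 0 < Real.sin x := Real.sin_pos_of_pos_of_lt_pi hx.1 hx.2
  have hsa : 0 < Real.sin ((1 - Δ) * x) := Real.sin_pos_of_pos_of_lt_pi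
    (mul_pos hα0 hx.1) (by nlinarith [hx.1, hx.2])
  have hsb : 0 < Real.sin (Δ * x) := Real.sin_pos_of_pos_of_lt_pi
    (mul_pos h0 hx.1) (by nlinarith [hx.1, hx.2])
  have ka := aux_F hα0.le hα1 x ⟨hx.1.le, hx.2.le⟩
  have kb := aux_F h0.le (by linarith) x ⟨hx.1.le, hx.2.le⟩
  -- cot θ ≤ c * cot (c θ)
  have la : Real.cos x / Real.sin x ≤ (1 - Δ) * (Real.cos ((1 - Δ) * x) / Real.sin ((1 - Δ) * x)) := by
    rw [mul_div_assoc'] at *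
    rw [div_le_div_iff₀ hs hsa]
    linarith [ka]
  have lb : Real.cos x / Real.sin x ≤ Δ * (Real.cos (Δ * x) / Real.sin (Δ * x)) := by
    rw [mul_div_assoc'] at *
    rw [div_le_div_iff₀ hs hsb]
    linarith [kb]
  have key : ((1 - Δ) / Δ) * (Real.cos x / Real.sin x) + (Real.cos x / Real.sin x)
      = (1 / Δ) * (Real.cos x / Real.sin x) := by
    field_simp
    ring
  have hcoef : 0 ≤ (1 - Δ) / Δ := by positivity
  have := mul_le_mul_of_nonneg_left la hcoef
  simp only [h1]
  linarith

lemma h2_nonneg (Δ x : ℝ) (h0 : 0 < Δ) (h1' : Δ < 1/2) (hx : x ∈ Ioo 0 π) :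
    0 ≤ h2 Δ x := by
  have hπ := pi_pos
  have hα0 : (0:ℝ) < 1 - Δ := by linarith
  have hα1 : 1 - Δ ≤ 1 := by linarith
  have hs : 0 < Real.sin x := Real.sin_pos_of_pos_of_lt_pi hx.1 hx.2
  have hsa : 0 < Real.sin ((1 - Δ) * x) := Real.sin_pos_of_pos_of_lt_pi
    (mul_pos hα0 hx.1) (by nlinarith [hx.1, hx.2])
  have hsb : 0 < Real.sin (Δ * x) := Real.sin_pos_of_pos_of_lt_pi
    (mul_pos h0 hx.1) (by nlinarith [hx.1, hx.2])
  have ka := aux_sin_mul hα0.le hα1 hx.1.le hx.2.le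
  have kb := aux_sin_mul h0.le (by linarith) hx.1.le hx.2.le
  have la : (1 - Δ) ^ 2 / (Real.sin ((1 - Δ) * x)) ^ 2 ≤ 1 / (Real.sin x) ^ 2 := by
    rw [div_le_div_iff₀ (by positivity) (by positivity)]
    nlinarith [ka, mul_pos hα0 hs]
  have lb : Δ ^ 2 / (Real.sin (Δ * x)) ^ 2 ≤ 1 / (Real.sin x) ^ 2 := by
    rw [div_le_div_iff₀ (by positivity) (by positivity)]
    nlinarith [kb, mul_pos h0 hs]
  have hcoef : 0 ≤ (1 - Δ) / Δ := by positivity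
  have key : ((1 - Δ) / Δ) * (1 / (Real.sin x) ^ 2) + (1 / (Real.sin x) ^ 2)
      = (1 / Δ) * (1 / (Real.sin x) ^ 2) := by
    field_simp
    ring
  have := mul_le_mul_of_nonneg_left la hcoef
  simp only [h2]
  linarith

lemma hfun_mono_convex (Δ : ℝ) (h0 : 0 < Δ) (h1' : Δ < 1/2) :
    MonotoneOn (hfun Δ) (Ioo 0 π) ∧ ConvexOn ℝ (Ioo 0 π) (hfun Δ) := by
  have hπ := pi_pos
  have hα0 : (0:ℝ) < 1 - Δ := by linarith
  have sinfacts : ∀ x ∈ Ioo (0:ℝ) π, Real.sin ((1 - Δ) * x) ≠ 0 ∧ Real.sin (Δ * x) ≠ 0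
      ∧ Real.sin x ≠ 0 := by
    intro x hx
    refine ⟨(Real.sin_pos_of_pos_of_lt_pi (mul_pos hα0 hx.1)
        (by nlinarith [hx.1, hx.2])).ne', (Real.sin_pos_of_pos_of_lt_pi (mul_pos h0 hx.1)
        (by nlinarith [hx.1, hx.2])).ne',
      (Real.sin_pos_of_pos_of_lt_pi hx.1 hx.2).ne'⟩
  have hd : ∀ x ∈ Ioo (0:ℝ) π, HasDerivAt (hfun Δ) (h1 Δ x) x := fun x hx =>
    hasDerivAt_hfun Δ x h0.ne' (sinfacts x hx).1 (sinfacts x hx).2.1 (sinfacts x hx).2.2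
  have hd1 : ∀ x ∈ Ioo (0:ℝ) π, HasDerivAt (h1 Δ) (h2 Δ x) x := fun x hx =>
    hasDerivAt_h1 Δ x h0.ne' (sinfacts x hx).1 (sinfacts x hx).2.1 (sinfacts x hx).2.2
  have hderiv : ∀ x ∈ Ioo (0:ℝ) π, deriv (hfun Δ) x = h1 Δ x := fun x hx => (hd x hx).deriv
  have hev : ∀ x ∈ Ioo (0:ℝ) π, deriv (hfun Δ) =ᶠ[nhds x] h1 Δ := fun x hx =>
    Filter.eventuallyEq_of_mem (isOpen_Ioo.mem_nhds hx) (fun y hy => hderiv y hy)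
  have hcont : ContinuousOn (hfun Δ) (Ioo 0 π) := fun x hx =>
    (hd x hx).differentiableAt.continuousAt.continuousWithinAt
  have hdiff : DifferentiableOn ℝ (hfun Δ) (interior (Ioo 0 π)) := by
    rw [interior_Ioo]
    exact fun x hx => (hd x hx).differentiableAt.differentiableWithinAt
  constructor
  · apply monotoneOn_of_deriv_nonneg (convex_Ioo 0 π) hcont hdiff
    intro x hx
    rw [interior_Ioo] at hx
    rw [hderiv x hx]
    exact h1_nonneg Δ x h0 h1' hx
  · apply convexOn_of_deriv2_nonneg (convex_Ioo 0 π) hcont hdiff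
    · rw [interior_Ioo]
      intro x hx
      exact ((hd1 x hx).differentiableAt.congr_of_eventuallyEq (hev x hx)).differentiableWithinAt
    · rw [interior_Ioo]
      intro x hx
      have e1 : deriv^[2] (hfun Δ) x = deriv (deriv (hfun Δ)) x := by
        simp [Function.iterate_succ]
      rw [e1, (hev x hx).deriv_eq, (hd1 x hx).deriv]
      exact h2_nonneg Δ x h0 h1' hx

/-- For 0 < Δ < 1/2 and α = 1−Δ, the function
g(θ;Δ) = [sin(αθ)]^{α/Δ}·sin(Δθ)/[sin θ]^{1/Δ} is monotonically
increasing and convex on (0, π). -/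
theorem stmt6 (Δ : ℝ) (h0 : 0 < Δ) (h1 : Δ < 1/2) :
    MonotoneOn (fun θ : ℝ =>
        (Real.sin ((1 - Δ) * θ)) ^ ((1 - Δ) / Δ) * Real.sin (Δ * θ)
          / (Real.sin θ) ^ (1 / Δ)) (Ioo 0 π) ∧
    ConvexOn ℝ (Ioo 0 π) (fun θ : ℝ =>
        (Real.sin ((1 - Δ) * θ)) ^ ((1 - Δ) / Δ) * Real.sin (Δ * θ)
          / (Real.sin θ) ^ (1 / Δ)) := by
  have hπ := pi_pos
  have hα0 : (0:ℝ) < 1 - Δ := by linarith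
  have heq : ∀ θ ∈ Ioo (0:ℝ) π,
      (Real.sin ((1 - Δ) * θ)) ^ ((1 - Δ) / Δ) * Real.sin (Δ * θ) / (Real.sin θ) ^ (1 / Δ)
        = Real.exp (hfun Δ θ) := by
    intro θ hθ
    have hs : 0 < Real.sin θ := Real.sin_pos_of_pos_of_lt_pi hθ.1 hθ.2
    have hsa : 0 < Real.sin ((1 - Δ) * θ) := Real.sin_pos_of_pos_of_lt_pi
      (mul_pos hα0 hθ.1) (by nlinarith [hθ.1, hθ.2])
    have hsb : 0 < Real.sin (Δ * θ) := Real.sin_pos_of_pos_of_lt_pi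
      (mul_pos h0 hθ.1) (by nlinarith [hθ.1, hθ.2])
    rw [Real.rpow_def_of_pos hsa, Real.rpow_def_of_pos hs,
      show Real.sin (Δ * θ) = Real.exp (Real.log (Real.sin (Δ * θ))) from
        (Real.exp_log hsb).symm, ← Real.exp_add, ← Real.exp_sub]
    simp only [hfun]
    congr 1
    ring
  obtain ⟨hmono, hconv⟩ := hfun_mono_convex Δ h0 h1
  constructor
  · intro a ha b hb hab
    dsimp only
    rw [heq a ha, heq b hb]
    exact Real.exp_le_exp.2 (hmono ha hb hab)
  · refine ⟨convex_Ioo 0 π, fun x hx y hy a b ha hb hab => ?_⟩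
    have hmem := convex_Ioo (0:ℝ) π hx hy ha hb hab
    simp only [smul_eq_mul] at *
    rw [heq _ hx, heq _ hy, heq _ hmem]
    calc Real.exp (hfun Δ (a * x + b * y))
        ≤ Real.exp (a * hfun Δ x + b * hfun Δ y) := by
          apply Real.exp_le_exp.2
          have := hconv.2 hx hy ha hb hab
          simpa using this
      _ ≤ a * Real.exp (hfun Δ x) + b * Real.exp (hfun Δ y) := by
          have := convexOn_exp.2 (mem_univ (hfun Δ x)) (mem_univ (hfun Δ y)) ha hb hab
          simpa using this
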